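/- In the setting of the normal basis for a point (v,x) of exotic Jordan type (μ,ν) with v = Σ_{i=1}^{ℓ(μ)} v_{i,μ_i}, the Jordan type of x acting on V/C[x]v is the partition (μ_1+ν_1, μ_2+ν_1, μ_2+ν_2, μ_3+ν_2, μ_3+ν_3, ...), i.e., the interleaving of (μ_{i+1}+ν_i) and (μ_i+ν_i). -/

import Mathlib

open Finset Module LinearMap

namespace JTAux




/-- Index of a "row-chain" basis: pairs `(r,t)` with `t < L r`. -/
abbrev SIdx (L : ℕ → ℕ) := {p : ℕ × ℕ // p.2 < L p.1}

def sFinset (L : ℕ → ℕ) (M : ℕ) : Finset (ℕ × ℕ) :=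
  (Finset.range M).biUnion fun r => {r} ×ˢ Finset.range (L r)

lemma mem_sFinset {L : ℕ → ℕ} {M : ℕ} (hM : ∀ r, M ≤ r → L r = 0) (p : ℕ × ℕ) :
    p ∈ sFinset L M ↔ p.2 < L p.1 := by
  simp only [sFinset, Finset.mem_biUnion, Finset.mem_range, Finset.mem_product,
    Finset.mem_singleton]
  constructor
  · rintro ⟨r, hr, rfl, h2⟩; exact h2
  · intro h
    refine ⟨p.1, ?_, rfl, h⟩
    by_contra hc
    rw [hM p.1 (le_of_not_gt hc)] at h; omega

noncomputable def sFintype {L : ℕ → ℕ} {M : ℕ} (hM : ∀ r, M ≤ r → L r = 0) :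
    Fintype (SIdx L) :=
  Fintype.subtype (sFinset L M) (mem_sFinset hM)

lemma card_sFinset (L : ℕ → ℕ) (M : ℕ) : (sFinset L M).card = ∑ r ∈ Finset.range M, L r := by
  rw [sFinset, Finset.card_biUnion]
  · refine Finset.sum_congr rfl fun r _ => ?_
    rw [Finset.card_product, Finset.card_singleton, Finset.card_range, one_mul]
  · intro a _ b _ hab
    simp only [Finset.disjoint_left, Finset.mem_product, Finset.mem_singleton]
    rintro ⟨p1, p2⟩ ⟨rfl, -⟩ ⟨h, -⟩
    exact hab h

lemma card_sIdx {L : ℕ → ℕ} {M : ℕ} (hM : ∀ r, M ≤ r → L r = 0) [Fintype (SIdx L)] :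
    Fintype.card (SIdx L) = ∑ r ∈ Finset.range M, L r := by
  rw [Fintype.card_of_subtype (sFinset L M) (mem_sFinset hM), card_sFinset]

section Shift

variable {L : ℕ → ℕ} {U : Type*} [AddCommGroup U] [Module ℂ U]
  (C : Basis (SIdx L) ℂ U) (y : Module.End ℂ U)
  (h0 : ∀ r (h : 0 < L r), y (C ⟨(r, 0), h⟩) = 0)
  (hs : ∀ r t (h : t + 1 < L r), y (C ⟨(r, t + 1), h⟩) = C ⟨(r, t), Nat.lt_of_succ_lt h⟩)

include h0 hs in
lemma pow_basis_apply : ∀ (k t r) (h : t < L r),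
    (y ^ k) (C ⟨(r, t), h⟩) =
      if hk : k ≤ t then C ⟨(r, t - k), lt_of_le_of_lt (Nat.sub_le _ _) h⟩ else 0 := by
  intro k
  induction k with
  | zero => intro t r h; simp
  | succ k ih =>
    intro t r h
    have : (y ^ (k + 1)) (C ⟨(r, t), h⟩) = (y ^ k) (y (C ⟨(r, t), h⟩)) := by
      rw [pow_succ]; rfl
    rw [this]
    match t with
    | 0 =>
      rw [h0 r h, map_zero]
      rw [dif_neg (by omega)]
    | t + 1 =>
      rw [hs r t h, ih]
      by_cases hk : k ≤ t
      · rw [dif_pos hk, dif_pos (by omega)]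
        congr 1
        exact Subtype.ext (by rw [Prod.mk.injEq]; exact ⟨rfl, by omega⟩)
      · rw [dif_neg hk, dif_neg (by omega)]

include h0 hs in
lemma ker_pow_eq_span (k : ℕ) :
    LinearMap.ker (y ^ k) = Submodule.span ℂ (⇑C '' {a : SIdx L | a.1.2 < k}) := by
  apply le_antisymm
  · intro u hu
    have hrepr : ∀ a : SIdx L, k ≤ a.1.2 → C.repr u a = 0 := by
      rintro ⟨⟨r, t⟩, ht⟩ hk
      have hu0 : (y ^ k) u = 0 := hu
      have hexp : (y ^ k) u = (C.repr u).sum fun a c => c • ((y ^ k) (C a)) := by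
        conv_lhs => rw [← C.linearCombination_repr u]
        rw [Finsupp.linearCombination_apply, map_finsuppSum]
        simp only [map_smul]
      have := congrArg (fun w => C.repr w ⟨(r, t - k), lt_of_le_of_lt (Nat.sub_le _ _) ht⟩)
        (hexp ▸ hu0 : ((C.repr u).sum fun a c => c • ((y ^ k) (C a))) = 0)
      simp only [map_finsuppSum, map_smul, Finsupp.sum_apply, Finsupp.smul_apply,
        map_zero, Finsupp.coe_zero, Pi.zero_apply] at this
      rw [Finsupp.sum_eq_single (⟨(r, t), ht⟩ : SIdx L)] at this
      · rw [pow_basis_apply C y h0 hs k t r ht, dif_pos hk, C.repr_self,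
          Finsupp.single_apply, if_pos (Subtype.ext rfl), smul_eq_mul, mul_one] at this
        exact this
      · rintro ⟨⟨r', t'⟩, ht'⟩ _ hne
        have hkt : k ≤ t := hk
        rw [pow_basis_apply C y h0 hs k t' r' ht']
        by_cases hk' : k ≤ t'
        · rw [dif_pos hk', C.repr_self, Finsupp.single_apply, if_neg, smul_zero]
          intro hcontra
          have h12 := Subtype.ext_iff.mp hcontra
          rw [Prod.mk.injEq] at h12
          exact hne (Subtype.ext (by rw [Prod.mk.injEq]; exact ⟨h12.1, by omega⟩))
        · rw [dif_neg hk', map_zero, Finsupp.coe_zero, Pi.zero_apply, smul_zero]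
      · exact fun _ => zero_smul ℂ _
    have hsupp : ↑(C.repr u).support ⊆ {a : SIdx L | a.1.2 < k} := by
      intro a ha
      rw [Finset.mem_coe, Finsupp.mem_support_iff] at ha
      by_contra hc
      exact ha (hrepr a (le_of_not_gt hc))
    exact Submodule.span_mono (Set.image_mono hsupp) (C.mem_span_repr_support u)
  · rw [Submodule.span_le]
    rintro _ ⟨⟨⟨r, t⟩, ht⟩, hmem, rfl⟩
    simp only [Set.mem_setOf_eq] at hmem
    simp only [SetLike.mem_coe, LinearMap.mem_ker]
    rw [pow_basis_apply C y h0 hs k t r ht, dif_neg (by omega)]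

include h0 hs in
lemma finrank_ker_pow {M : ℕ} (hM : ∀ r, M ≤ r → L r = 0) (k : ℕ) :
    finrank ℂ (LinearMap.ker (y ^ k)) = ∑ r ∈ Finset.range M, min k (L r) := by
  rw [ker_pow_eq_span C y h0 hs k]
  have hset : (⇑C '' {a : SIdx L | a.1.2 < k}) =
      Set.range (fun a : {a : SIdx L // a.1.2 < k} => C a.1) := by
    ext u; simp [Set.mem_image, Set.mem_range, Subtype.exists]
  rw [hset]
  have hli : LinearIndependent ℂ (fun a : {a : SIdx L // a.1.2 < k} => C a.1) :=
    C.linearIndependent.comp _ Subtype.val_injective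
  haveI : Fintype (SIdx (fun r => min k (L r))) :=
    sFintype (M := M) (fun r hr => by rw [hM r hr]; simp)
  haveI : Fintype {a : SIdx L // a.1.2 < k} :=
    Fintype.ofEquiv (SIdx (fun r => min k (L r)))
      { toFun := fun p => ⟨⟨p.1, lt_of_lt_of_le p.2 (min_le_right _ _)⟩,
          lt_of_lt_of_le p.2 (min_le_left _ _)⟩
        invFun := fun a => ⟨a.1.1, lt_min a.2 a.1.2⟩
        left_inv := fun p => rfl
        right_inv := fun a => rfl }
    -- note direction
  rw [finrank_span_eq_card hli]
  have : Fintype.card {a : SIdx L // a.1.2 < k} = Fintype.card (SIdx (fun r => min k (L r))) :=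
    Fintype.card_congr (Equiv.symm
      { toFun := fun p => ⟨⟨p.1, lt_of_lt_of_le p.2 (min_le_right _ _)⟩,
          lt_of_lt_of_le p.2 (min_le_left _ _)⟩
        invFun := fun a => ⟨a.1.1, lt_min a.2 a.1.2⟩
        left_inv := fun p => rfl
        right_inv := fun a => rfl })
  rw [this, card_sIdx (M := M) (fun r hr => by rw [hM r hr]; simp)]

end Shift




lemma rowLen_zero {μ : YoungDiagram} {i : ℕ} (h : μ.card ≤ i) : μ.rowLen i = 0 := by
  by_contra h0
  have hmem : (i, 0) ∈ μ := YoungDiagram.mem_iff_lt_rowLen.mpr (Nat.pos_of_ne_zero h0)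
  have hsub : (Finset.range (i + 1)).image (fun i' => (i', 0)) ⊆ μ.cells := by
    intro p hp
    simp only [Finset.mem_image, Finset.mem_range] at hp
    obtain ⟨i', hi', rfl⟩ := hp
    exact (YoungDiagram.mem_cells _).mpr (μ.up_left_mem (by omega) le_rfl hmem)
  have hc := Finset.card_le_card hsub
  rw [Finset.card_image_of_injective _ (fun a b hab => by
    simpa using congrArg Prod.fst hab), Finset.card_range] at hc
  exact absurd hc (by simp only [YoungDiagram.card] at h ⊢; omega)

lemma sum_range_two_mul {M : Type*} [AddCommMonoid M] (F : ℕ → M) (N : ℕ) :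
    ∑ r ∈ Finset.range (2 * N), F r = ∑ i ∈ Finset.range N, (F (2 * i) + F (2 * i + 1)) := by
  induction N with
  | zero => simp
  | succ n ih =>
    have h2 : 2 * (n + 1) = (2 * n + 1) + 1 := by ring
    rw [h2, Finset.sum_range_succ, Finset.sum_range_succ, ih, Finset.sum_range_succ, add_assoc]


end JTAux



/-- `x` has Jordan type the partition recorded by the Young diagram `σ`: the length of the
`(k+1)`-st column of `σ` (i.e. the number of parts of size at least `k+1`) equals
`dim ker x^{k+1} - dim ker x^k`. -/
def HasJordanType {V : Type*} [AddCommGroup V] [Module ℂ V]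
    (x : Module.End ℂ V) (σ : YoungDiagram) : Prop :=
  ∀ k : ℕ, σ.colLen k =
    Module.finrank ℂ (LinearMap.ker (x ^ (k + 1))) - Module.finrank ℂ (LinearMap.ker (x ^ k))

/-- Index set for the 'normal' basis `{v_{ij}, v*_{ij}}` attached to a bipartition `(μ,ν)`:
pairs `((i,j), b)` with `i` a (zero-based) row index, `0 ≤ j < λ_i = μ_i + ν_i` a zero-based
position in the row, and `b = false` for the vectors `v_{ij}`, `b = true` for `v*_{ij}`. -/
def NBIdx (μ ν : YoungDiagram) : Type :=
  {p : (ℕ × ℕ) × Bool // p.1.2 < μ.rowLen p.1.1 + ν.rowLen p.1.1}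

lemma NBIdx_ext {μ ν : YoungDiagram} {i j i' j' : ℕ} {b b' : Bool}
    {h : j < μ.rowLen i + ν.rowLen i} {h' : j' < μ.rowLen i' + ν.rowLen i'}
    (hi : i = i') (hj : j = j') (hb : b = b') :
    (⟨((i, j), b), h⟩ : NBIdx μ ν) = ⟨((i', j'), b'), h'⟩ := by
  subst hi; subst hj; subst hb; rfl

/-- with `(v,x)` in normal form for the bipartition `(μ,ν)` (so `x` acts on the
normal basis in the standard way and `v = Σ_i v_{i,μ_i}`), the Jordan type of `x` on
`V / ℂ[x]v` is the interleaving `(μ_1+ν_1, μ_2+ν_1, μ_2+ν_2, μ_3+ν_2, ...)`, i.e. with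
zero-based rows: row `2i` has length `μ_i + ν_i` and row `2i+1` has length `μ_{i+1} + ν_i`. -/
theorem normal_basis_jordan_type_mod_cyclic (μ ν : YoungDiagram) {V : Type*} [AddCommGroup V]
    [Module ℂ V] (B : Basis (NBIdx μ ν) ℂ V) (x : Module.End ℂ V)
    (hv0 : ∀ i (h : 0 < μ.rowLen i + ν.rowLen i), x (B ⟨((i, 0), false), h⟩) = 0)
    (hv : ∀ i j (h : j + 1 < μ.rowLen i + ν.rowLen i),
      x (B ⟨((i, j + 1), false), h⟩) = B ⟨((i, j), false), Nat.lt_of_succ_lt h⟩)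
    (hs : ∀ i j (h : j + 1 < μ.rowLen i + ν.rowLen i),
      x (B ⟨((i, j), true), Nat.lt_of_succ_lt h⟩) = B ⟨((i, j + 1), true), h⟩)
    (hstop : ∀ i (h : 0 < μ.rowLen i + ν.rowLen i),
      x (B ⟨((i, μ.rowLen i + ν.rowLen i - 1), true), Nat.sub_lt h Nat.one_pos⟩) = 0)
    (v : V)
    (hvdef : v = ∑ i ∈ Finset.range (μ.card + ν.card + 1),
      (if h : 0 < μ.rowLen i then
        B ⟨((i, μ.rowLen i - 1), false), lt_of_lt_of_le (Nat.sub_lt h Nat.one_pos) (Nat.le_add_right _ _)⟩ else 0)) :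
    ∀ x' : Module.End ℂ (V ⧸ Submodule.span ℂ (Set.range fun k : ℕ => (x ^ k) v)),
      (∀ u : V, x' (Submodule.Quotient.mk u) = Submodule.Quotient.mk (x u)) →
      ∀ σ : YoungDiagram, HasJordanType x' σ →
        ∀ i : ℕ, σ.rowLen (2 * i) = μ.rowLen i + ν.rowLen i ∧
          σ.rowLen (2 * i + 1) = μ.rowLen (i + 1) + ν.rowLen i := by
  classical
  set W : Submodule ℂ V := Submodule.span ℂ (Set.range fun k : ℕ => (x ^ k) v) with hWdef
  intro x' hx' σ hσ i0
  set N : ℕ := μ.card + ν.card + 1 with hNdef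
  have hμN : ∀ i, N ≤ i → μ.rowLen i = 0 := fun i hi => JTAux.rowLen_zero (by omega)
  have hνN : ∀ i, N ≤ i → ν.rowLen i = 0 := fun i hi => JTAux.rowLen_zero (by omega)
  -- counting V
  set LV : ℕ → ℕ := fun r => μ.rowLen (r / 2) + ν.rowLen (r / 2) with hLVdef
  have hLVN : ∀ r, 2 * N ≤ r → LV r = 0 := by
    intro r hr
    have h1 := hμN (r / 2) (by omega)
    have h2 := hνN (r / 2) (by omega)
    simp only [hLVdef]
    omega
  have eqvV : NBIdx μ ν ≃ JTAux.SIdx LV :=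
    { toFun := fun a => ⟨(2 * a.1.1.1 + a.1.2.toNat, a.1.1.2), by
        have h := a.2
        have hdiv : (2 * a.1.1.1 + a.1.2.toNat) / 2 = a.1.1.1 := by
          cases hb : a.1.2 <;> simp [hb] <;> omega
        show a.1.1.2 < LV (2 * a.1.1.1 + a.1.2.toNat, a.1.1.2).1
        simp only [hLVdef]
        rw [hdiv]
        exact h⟩
      invFun := fun p => ⟨((p.1.1 / 2, p.1.2), p.1.1 % 2 == 1), by
        have h := p.2
        simp only [hLVdef] at h
        exact h⟩
      left_inv := by
        rintro ⟨⟨⟨i, j⟩, b⟩, h⟩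
        apply Subtype.ext
        cases b
        · show ((((2 * i + Bool.toNat false) / 2, j), ((2 * i + Bool.toNat false) % 2 == 1))
            : (ℕ × ℕ) × Bool) = ((i, j), false)
          have e0 : Bool.toNat false = 0 := rfl
          have e1 : (2 * i + 0) / 2 = i := by omega
          have e2 : (2 * i + 0) % 2 = 0 := by omega
          rw [e0, e1, e2]
          rfl
        · show ((((2 * i + Bool.toNat true) / 2, j), ((2 * i + Bool.toNat true) % 2 == 1))
            : (ℕ × ℕ) × Bool) = ((i, j), true)
          have e0 : Bool.toNat true = 1 := rfl
          have e1 : (2 * i + 1) / 2 = i := by omega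
          have e2 : (2 * i + 1) % 2 = 1 := by omega
          rw [e0, e1, e2]
          rfl
      right_inv := by
        rintro ⟨⟨r, t⟩, h⟩
        apply Subtype.ext
        show (2 * (r / 2) + (r % 2 == 1).toNat, t) = (r, t)
        rcases Nat.mod_two_eq_zero_or_one r with hr | hr
        · rw [hr]
          have e0 : ((0 == 1 : Bool)).toNat = 0 := rfl
          rw [e0]
          exact congrArg₂ Prod.mk (by omega) rfl
        · rw [hr]
          have e0 : ((1 == 1 : Bool)).toNat = 1 := rfl
          rw [e0]
          exact congrArg₂ Prod.mk (by omega) rfl }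
  haveI instFinSV : Fintype (JTAux.SIdx LV) := JTAux.sFintype hLVN
  haveI instFinNB : Fintype (NBIdx μ ν) := Fintype.ofEquiv _ eqvV.symm
  haveI : Module.Finite ℂ V := Module.Finite.of_basis B
  have hfinV : finrank ℂ V = ∑ r ∈ Finset.range (2 * N), LV r := by
    rw [Module.finrank_eq_card_basis B, Fintype.card_congr eqvV, JTAux.card_sIdx hLVN]
  -- power formula on "false" vectors
  have Bpow : ∀ k j i (h : j < μ.rowLen i + ν.rowLen i), (x ^ k) (B ⟨((i, j), false), h⟩) =
      if hk : k ≤ j then B ⟨((i, j - k), false), by dsimp only; omega⟩ else 0 := by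
    intro k
    induction k with
    | zero => intro j i h; simp
    | succ k ih =>
      intro j i h
      have hstep : (x ^ (k + 1)) (B ⟨((i, j), false), h⟩)
          = (x ^ k) (x (B ⟨((i, j), false), h⟩)) := by
        rw [pow_succ]; rfl
      rw [hstep]
      match j, h with
      | 0, h =>
        rw [hv0 i h, map_zero, dif_neg (by omega)]
      | j + 1, h =>
        rw [hv i j h, ih j i (by omega)]
        by_cases hk : k ≤ j
        · rw [dif_pos hk, dif_pos (by omega)]
          exact congrArg B (NBIdx_ext rfl (by omega) rfl)
        · rw [dif_neg hk, dif_neg (by omega)]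
  -- chain tops
  set e : ℕ → V := fun i =>
    if h : 0 < μ.rowLen i + ν.rowLen i then
      B ⟨((i, μ.rowLen i + ν.rowLen i - 1), false), by dsimp only; omega⟩
    else 0 with hedef
  have E1 : ∀ t i, (x ^ t) (e i) =
      if h : t < μ.rowLen i + ν.rowLen i then
        B ⟨((i, μ.rowLen i + ν.rowLen i - 1 - t), false), by dsimp only; omega⟩ else 0 := by
    intro t i
    simp only [hedef]
    by_cases h0 : 0 < μ.rowLen i + ν.rowLen i
    · rw [dif_pos h0, Bpow t (μ.rowLen i + ν.rowLen i - 1) i (by omega)]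
      by_cases ht : t < μ.rowLen i + ν.rowLen i
      · rw [dif_pos (by omega), dif_pos ht]
      · rw [dif_neg (by omega), dif_neg ht]
    · rw [dif_neg h0, map_zero, dif_neg (by omega)]
  have E2 : v = ∑ i ∈ Finset.range N, (x ^ ν.rowLen i) (e i) := by
    rw [hvdef]
    refine Finset.sum_congr rfl fun i _ => ?_
    rw [E1]
    by_cases hμ : 0 < μ.rowLen i
    · rw [dif_pos hμ, dif_pos (by omega)]
      exact (congrArg B (NBIdx_ext rfl (by omega) rfl)).symm
    · rw [dif_neg hμ, dif_neg (by omega)]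
  have xv : ∀ k, (x ^ k) v = ∑ i ∈ Finset.range N, (x ^ (k + ν.rowLen i)) (e i) := by
    intro k
    rw [E2, map_sum]
    refine Finset.sum_congr rfl fun i _ => ?_
    rw [← Module.End.mul_apply, ← pow_add]
  have hWv : ∀ k, (x ^ k) v ∈ W := fun k => Submodule.subset_span ⟨k, rfl⟩
  set f : ℕ → V := fun i =>
    ∑ j ∈ Finset.range (i + 1), (x ^ (ν.rowLen j - ν.rowLen i)) (e j) with hfdef
  have F2 : ∀ i, (x ^ (μ.rowLen (i + 1) + ν.rowLen i)) (f i) = (x ^ μ.rowLen (i + 1)) v := by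
    intro i
    have hgz : ∀ j, (i + 1 ≤ j ∨ N ≤ j) → (x ^ (μ.rowLen (i + 1) + ν.rowLen j)) (e j) = 0 := by
      intro j hj
      rw [E1, dif_neg]
      rcases hj with hj | hj
      · have h1 : μ.rowLen j ≤ μ.rowLen (i + 1) := μ.rowLen_anti _ _ hj
        omega
      · have h1 := hμN j hj
        have h2 := hνN j hj
        omega
    have lhs : (x ^ (μ.rowLen (i + 1) + ν.rowLen i)) (f i)
        = ∑ j ∈ Finset.range (i + 1), (x ^ (μ.rowLen (i + 1) + ν.rowLen j)) (e j) := by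
      simp only [hfdef, map_sum]
      refine Finset.sum_congr rfl fun j hj => ?_
      have hνj : ν.rowLen i ≤ ν.rowLen j :=
        ν.rowLen_anti _ _ (by have := Finset.mem_range.mp hj; omega)
      have hE : (μ.rowLen (i + 1) + ν.rowLen i) + (ν.rowLen j - ν.rowLen i)
          = μ.rowLen (i + 1) + ν.rowLen j := by omega
      rw [← Module.End.mul_apply, ← pow_add, hE]
    have rhs : (x ^ μ.rowLen (i + 1)) v
        = ∑ j ∈ Finset.range N, (x ^ (μ.rowLen (i + 1) + ν.rowLen j)) (e j) := xv _
    rw [lhs, rhs]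
    rw [Finset.sum_subset (Finset.range_subset_range.mpr (le_max_left (i + 1) N))
      (fun j _ hj => hgz j (Or.inl (by revert hj; simp only [Finset.mem_range]; omega)))]
    rw [Finset.sum_subset (Finset.range_subset_range.mpr (le_max_right (i + 1) N))
      (fun j _ hj => hgz j (Or.inr (by revert hj; simp only [Finset.mem_range]; omega)))]
  have Ef : ∀ i, e i = f i - ∑ j ∈ Finset.range i, (x ^ (ν.rowLen j - ν.rowLen i)) (e j) := by
    intro i
    simp only [hfdef]
    rw [Finset.sum_range_succ, Nat.sub_self, pow_zero]
    simp only [Module.End.one_apply]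
    abel
  -- quotient shape
  set Lt : ℕ → ℕ := fun r =>
    if r % 2 = 0 then μ.rowLen (r / 2) + ν.rowLen (r / 2)
    else μ.rowLen (r / 2 + 1) + ν.rowLen (r / 2) with hLtdef
  have hLtN : ∀ r, 2 * N ≤ r → Lt r = 0 := by
    intro r hr
    have h1 := hμN (r / 2) (by omega)
    have h2 := hνN (r / 2) (by omega)
    have h3 := hμN (r / 2 + 1) (by omega)
    simp only [hLtdef]
    split <;> omega
  have hx'Q : ∀ u : V, x' (W.mkQ u) = W.mkQ (x u) := fun u => hx' u
  have hπW : ∀ u, u ∈ W → W.mkQ u = 0 := fun u hu => (Submodule.Quotient.mk_eq_zero W).mpr hu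
  set c : JTAux.SIdx Lt → V ⧸ W := fun p =>
    if hp : p.1.1 % 2 = 0 then
      W.mkQ (B ⟨((p.1.1 / 2, μ.rowLen (p.1.1 / 2) + ν.rowLen (p.1.1 / 2) - 1 - p.1.2), true), by
        have h2 := p.2
        simp only [hLtdef, if_pos hp] at h2
        dsimp only
        omega⟩)
    else
      W.mkQ ((x ^ (μ.rowLen (p.1.1 / 2 + 1) + ν.rowLen (p.1.1 / 2) - 1 - p.1.2)) (f (p.1.1 / 2)))
    with hcdef
  have hceven : ∀ (r t : ℕ) (hr : r % 2 = 0) (h : t < Lt r)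
      (h' : μ.rowLen (r / 2) + ν.rowLen (r / 2) - 1 - t
        < μ.rowLen (r / 2) + ν.rowLen (r / 2)),
      c ⟨(r, t), h⟩ = W.mkQ
        (B ⟨((r / 2, μ.rowLen (r / 2) + ν.rowLen (r / 2) - 1 - t), true), h'⟩) := by
    intro r t hr h h'
    simp only [hcdef]
    rw [dif_pos hr]
  have hcodd : ∀ (r t : ℕ) (hr : ¬ r % 2 = 0) (h : t < Lt r),
      c ⟨(r, t), h⟩ = W.mkQ
        ((x ^ (μ.rowLen (r / 2 + 1) + ν.rowLen (r / 2) - 1 - t)) (f (r / 2))) := by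
    intro r t hr h
    simp only [hcdef]
    rw [dif_neg hr]
  -- spanning
  have S1 : ∀ i s, W.mkQ ((x ^ s) (f i)) ∈ Submodule.span ℂ (Set.range c) := by
    intro i s
    by_cases hsm : s < μ.rowLen (i + 1) + ν.rowLen i
    · refine Submodule.subset_span ⟨⟨(2 * i + 1, μ.rowLen (i + 1) + ν.rowLen i - 1 - s), by
        simp only [hLtdef]
        rw [if_neg (by omega)]
        have h2 : (2 * i + 1) / 2 = i := by omega
        rw [h2]
        omega⟩, ?_⟩
      rw [hcodd _ _ (by omega) _]
      have h2 : (2 * i + 1) / 2 = i := by omega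
      rw [h2]
      have hE : μ.rowLen (i + 1) + ν.rowLen i - 1 - (μ.rowLen (i + 1) + ν.rowLen i - 1 - s)
          = s := by omega
      rw [hE]
    · have hxs : x ^ s = x ^ (s - (μ.rowLen (i + 1) + ν.rowLen i))
          * x ^ (μ.rowLen (i + 1) + ν.rowLen i) := by
        rw [← pow_add]
        congr 1
        omega
      have hsM : (x ^ s) (f i)
          = (x ^ (s - (μ.rowLen (i + 1) + ν.rowLen i) + μ.rowLen (i + 1))) v := by
        rw [hxs, Module.End.mul_apply, F2 i, ← Module.End.mul_apply, ← pow_add]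
      rw [hsM, hπW _ (hWv _)]
      exact Submodule.zero_mem _
  have S2 : ∀ i t, W.mkQ ((x ^ t) (e i)) ∈ Submodule.span ℂ (Set.range c) := by
    intro i
    induction i using Nat.strong_induction_on with
    | _ i ih =>
      intro t
      have hei : (x ^ t) (e i) = (x ^ t) (f i)
          - ∑ j ∈ Finset.range i, (x ^ (t + (ν.rowLen j - ν.rowLen i))) (e j) := by
        rw [Ef i, map_sub]
        congr 1
        rw [map_sum]
        refine Finset.sum_congr rfl fun j hj => ?_
        rw [← Module.End.mul_apply, ← pow_add]
      rw [hei, map_sub]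
      refine sub_mem (S1 i t) ?_
      rw [map_sum]
      exact Submodule.sum_mem _ fun j hj => ih j (Finset.mem_range.mp hj) _
  have S3 : ∀ a : NBIdx μ ν, W.mkQ (B a) ∈ Submodule.span ℂ (Set.range c) := by
    rintro ⟨⟨⟨i, j⟩, b⟩, h⟩
    have h' : j < μ.rowLen i + ν.rowLen i := h
    cases b
    · have hB : B ⟨((i, j), false), h⟩
          = (x ^ (μ.rowLen i + ν.rowLen i - 1 - j)) (e i) := by
        rw [E1, dif_pos (by omega)]
        exact (congrArg B (NBIdx_ext rfl (by omega) rfl)).symm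
      rw [hB]
      exact S2 i _
    · refine Submodule.subset_span ⟨⟨(2 * i, μ.rowLen i + ν.rowLen i - 1 - j), by
        simp only [hLtdef]
        rw [if_pos (by omega)]
        have h2 : 2 * i / 2 = i := by omega
        rw [h2]
        omega⟩, ?_⟩
      have hd2 : 2 * i / 2 = i := by omega
      rw [hceven _ _ (by omega) _ (by rw [hd2]; omega)]
      exact congrArg _ (congrArg B (NBIdx_ext hd2 (by rw [hd2]; omega) rfl))
  have hspan : ⊤ ≤ Submodule.span ℂ (Set.range c) := by
    intro q _
    obtain ⟨u, rfl⟩ := Submodule.mkQ_surjective W q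
    have hu : u ∈ Submodule.span ℂ (Set.range ⇑B) := by rw [Basis.span_eq]; trivial
    refine Submodule.span_induction
      (p := fun u _ => W.mkQ u ∈ Submodule.span ℂ (Set.range c)) ?_ ?_ ?_ ?_ hu
    · rintro _ ⟨a, rfl⟩; exact S3 a
    · simp only [map_zero]; exact Submodule.zero_mem _
    · intro y z _ _ hy hz; simp only [map_add]; exact add_mem hy hz
    · intro t y _ hy; simp only [map_smul]; exact Submodule.smul_mem _ _ hy
  -- rank of W
  have hrankW : finrank ℂ W = μ.rowLen 0 := by
    rcases Nat.eq_zero_or_pos (μ.rowLen 0) with h0 | h0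
    · have hveq : v = 0 := by
        rw [hvdef]
        refine Finset.sum_eq_zero fun i _ => ?_
        rw [dif_neg]
        have := μ.rowLen_anti 0 i (Nat.zero_le _)
        omega
      have hWbot : W = ⊥ := by
        refine le_antisymm ?_ bot_le
        rw [hWdef, Submodule.span_le]
        rintro _ ⟨k, rfl⟩
        simp [hveq]
      rw [hWbot, h0, finrank_bot]
    · have hcoord : ∀ (k' : ℕ) (k : Fin (μ.rowLen 0)),
          B.repr ((x ^ k') v) (⟨((0, μ.rowLen 0 - 1 - (k : ℕ)), false), by dsimp only; omega⟩ : NBIdx μ ν)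
            = if k' = (k : ℕ) then 1 else 0 := by
        intro k' k
        rw [xv, map_sum]
        erw [Finset.sum_apply']
        rw [Finset.sum_eq_single_of_mem 0 (Finset.mem_range.mpr (by omega))]
        · rw [E1]
          by_cases hcond : k' + ν.rowLen 0 < μ.rowLen 0 + ν.rowLen 0
          · rw [dif_pos hcond]
            erw [Basis.repr_self, Finsupp.single_apply]
            by_cases hkk : k' = (k : ℕ)
            · rw [if_pos, if_pos hkk]
              exact NBIdx_ext rfl (by omega) rfl
            · rw [if_neg, if_neg hkk]
              intro hcontra
              have hc2 := Subtype.ext_iff.mp hcontra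
              simp only [Prod.mk.injEq] at hc2
              have hk2 := k.2
              omega
          · rw [dif_neg hcond, map_zero, if_neg (by have := k.2; omega)]
            rfl
        · intro i hi hne
          rw [E1]
          by_cases hcond : k' + ν.rowLen i < μ.rowLen i + ν.rowLen i
          · rw [dif_pos hcond]
            erw [Basis.repr_self, Finsupp.single_apply]
            rw [if_neg]
            intro hcontra
            have hc2 := Subtype.ext_iff.mp hcontra
            simp only [Prod.mk.injEq] at hc2
            exact hne hc2.1.1
          · rw [dif_neg hcond, map_zero]
            rfl
      have hind : LinearIndependent ℂ (fun k : Fin (μ.rowLen 0) => (x ^ (k : ℕ)) v) := by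
        rw [Fintype.linearIndependent_iff]
        intro g hg k
        have hcg := congrArg
          (fun w => B.repr w (⟨((0, μ.rowLen 0 - 1 - (k : ℕ)), false), by dsimp only; omega⟩ : NBIdx μ ν)) hg
        simp only [map_sum, map_smul, map_zero, Finsupp.coe_zero, Pi.zero_apply,
          Finset.sum_apply', Finsupp.smul_apply] at hcg
        erw [Finset.sum_apply'] at hcg
        rw [Finset.sum_eq_single k] at hcg
        · erw [Finsupp.smul_apply, hcoord (k : ℕ) k] at hcg
          rw [if_pos rfl, smul_eq_mul, mul_one] at hcg
          exact hcg
        · intro k' _ hne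
          erw [Finsupp.smul_apply, hcoord (k' : ℕ) k]
          rw [if_neg (fun hc => hne (Fin.ext hc)), smul_zero]
        · intro habs
          exact absurd (Finset.mem_univ k) habs
      have hspanW : W = Submodule.span ℂ
          (Set.range fun k : Fin (μ.rowLen 0) => (x ^ (k : ℕ)) v) := by
        apply le_antisymm
        · rw [hWdef, Submodule.span_le]
          rintro _ ⟨k, rfl⟩
          by_cases hk : k < μ.rowLen 0
          · exact Submodule.subset_span ⟨⟨k, hk⟩, rfl⟩
          · have hz : (x ^ k) v = 0 := by
              rw [xv]
              refine Finset.sum_eq_zero fun i _ => ?_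
              rw [E1, dif_neg]
              have := μ.rowLen_anti 0 i (Nat.zero_le _)
              omega
            simp only [hz]
            exact Submodule.zero_mem _
        · rw [Submodule.span_le]
          rintro _ ⟨k, rfl⟩
          exact Submodule.subset_span ⟨(k : ℕ), rfl⟩
      rw [hspanW, finrank_span_eq_card hind, Fintype.card_fin]
  -- cardinality of the quotient index
  haveI instFinLt : Fintype (JTAux.SIdx Lt) := JTAux.sFintype hLtN
  have hcard : Fintype.card (JTAux.SIdx Lt) = finrank ℂ (V ⧸ W) := by
    have hquot := Submodule.finrank_quotient_add_finrank W
    have hcardLt : Fintype.card (JTAux.SIdx Lt) = ∑ r ∈ Finset.range (2 * N), Lt r :=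
      JTAux.card_sIdx hLtN
    have hsum1 : ∑ r ∈ Finset.range (2 * N), LV r
        = ∑ i ∈ Finset.range N, ((μ.rowLen i + ν.rowLen i) + (μ.rowLen i + ν.rowLen i)) := by
      rw [JTAux.sum_range_two_mul]
      refine Finset.sum_congr rfl fun i _ => ?_
      have h1 : 2 * i / 2 = i := by omega
      have h2 : (2 * i + 1) / 2 = i := by omega
      simp only [hLVdef, h1, h2]
    have hsum2 : ∑ r ∈ Finset.range (2 * N), Lt r
        = ∑ i ∈ Finset.range N,
          ((μ.rowLen i + ν.rowLen i) + (μ.rowLen (i + 1) + ν.rowLen i)) := by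
      rw [JTAux.sum_range_two_mul]
      refine Finset.sum_congr rfl fun i _ => ?_
      have h1 : 2 * i / 2 = i := by omega
      have h2 : (2 * i + 1) / 2 = i := by omega
      simp only [hLtdef]
      rw [if_pos (by omega), if_neg (by omega), h1, h2]
    have d1 : ∑ i ∈ Finset.range N, ((μ.rowLen i + ν.rowLen i) + (μ.rowLen i + ν.rowLen i))
        = (∑ i ∈ Finset.range N, (μ.rowLen i + ν.rowLen i))
          + ∑ i ∈ Finset.range N, (μ.rowLen i + ν.rowLen i) := Finset.sum_add_distrib
    have d2 : ∑ i ∈ Finset.range N,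
          ((μ.rowLen i + ν.rowLen i) + (μ.rowLen (i + 1) + ν.rowLen i))
        = (∑ i ∈ Finset.range N, (μ.rowLen i + ν.rowLen i))
          + ∑ i ∈ Finset.range N, (μ.rowLen (i + 1) + ν.rowLen i) := Finset.sum_add_distrib
    have d3 : ∑ i ∈ Finset.range N, (μ.rowLen (i + 1) + ν.rowLen i)
        = (∑ i ∈ Finset.range N, μ.rowLen (i + 1)) + ∑ i ∈ Finset.range N, ν.rowLen i :=
      Finset.sum_add_distrib
    have d4 : ∑ i ∈ Finset.range N, (μ.rowLen i + ν.rowLen i)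
        = (∑ i ∈ Finset.range N, μ.rowLen i) + ∑ i ∈ Finset.range N, ν.rowLen i :=
      Finset.sum_add_distrib
    have hA := Finset.sum_range_succ' (fun i => μ.rowLen i) N
    have hB2 := Finset.sum_range_succ (fun i => μ.rowLen i) N
    have hN0 : μ.rowLen N = 0 := hμN N le_rfl
    omega
  set CQ : Basis (JTAux.SIdx Lt) ℂ (V ⧸ W) :=
    basisOfTopLeSpanOfCardEqFinrank c hspan hcard with hCQdef
  have hCQc : ∀ p, CQ p = c p := fun p => by
    rw [hCQdef, coe_basisOfTopLeSpanOfCardEqFinrank]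
  -- shift structure on the quotient
  have h0Q : ∀ r (h : 0 < Lt r), x' (CQ ⟨(r, 0), h⟩) = 0 := by
    intro r h
    rw [hCQc]
    by_cases hr : r % 2 = 0
    · have h' : 0 < μ.rowLen (r / 2) + ν.rowLen (r / 2) := by
        simp only [hLtdef, if_pos hr] at h
        exact h
      rw [hceven r 0 hr h (by omega), hx'Q]
      have hidx : (⟨((r / 2, μ.rowLen (r / 2) + ν.rowLen (r / 2) - 1 - 0), true),
          by dsimp only; omega⟩ : NBIdx μ ν)
          = ⟨((r / 2, μ.rowLen (r / 2) + ν.rowLen (r / 2) - 1), true),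
            Nat.sub_lt h' Nat.one_pos⟩ :=
        NBIdx_ext rfl (by omega) rfl
      rw [hidx, hstop (r / 2) h', map_zero]
    · have h' : 0 < μ.rowLen (r / 2 + 1) + ν.rowLen (r / 2) := by
        simp only [hLtdef, if_neg hr] at h
        exact h
      rw [hcodd r 0 hr h, hx'Q]
      have hpow : x ((x ^ (μ.rowLen (r / 2 + 1) + ν.rowLen (r / 2) - 1 - 0)) (f (r / 2)))
          = (x ^ (μ.rowLen (r / 2 + 1) + ν.rowLen (r / 2))) (f (r / 2)) := by
        rw [← Module.End.mul_apply, ← pow_succ']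
        congr 2
        omega
      rw [hpow, F2, hπW _ (hWv _)]
  have hsQ : ∀ r t (h : t + 1 < Lt r),
      x' (CQ ⟨(r, t + 1), h⟩) = CQ ⟨(r, t), Nat.lt_of_succ_lt h⟩ := by
    intro r t h
    rw [hCQc, hCQc]
    by_cases hr : r % 2 = 0
    · have h' : t + 1 < μ.rowLen (r / 2) + ν.rowLen (r / 2) := by
        simp only [hLtdef, if_pos hr] at h
        exact h
      rw [hceven r (t + 1) hr h (by omega), hceven r t hr (Nat.lt_of_succ_lt h) (by omega),
        hx'Q]
      have hidx : (⟨((r / 2, μ.rowLen (r / 2) + ν.rowLen (r / 2) - 1 - (t + 1)), true),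
          by dsimp only; omega⟩ : NBIdx μ ν)
          = ⟨((r / 2, μ.rowLen (r / 2) + ν.rowLen (r / 2) - 2 - t), true),
            by dsimp only; omega⟩ :=
        NBIdx_ext rfl (by omega) rfl
      rw [hidx]
      have hstep := hs (r / 2) (μ.rowLen (r / 2) + ν.rowLen (r / 2) - 2 - t) (by omega)
      rw [hstep]
      exact congrArg _ (congrArg B (NBIdx_ext rfl (by omega) rfl))
    · have h' : t + 1 < μ.rowLen (r / 2 + 1) + ν.rowLen (r / 2) := by
        simp only [hLtdef, if_neg hr] at h
        exact h
      rw [hcodd r (t + 1) hr h, hcodd r t hr (Nat.lt_of_succ_lt h), hx'Q]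
      have hpow : x ((x ^ (μ.rowLen (r / 2 + 1) + ν.rowLen (r / 2) - 1 - (t + 1))) (f (r / 2)))
          = (x ^ (μ.rowLen (r / 2 + 1) + ν.rowLen (r / 2) - 1 - t)) (f (r / 2)) := by
        rw [← Module.End.mul_apply, ← pow_succ']
        congr 2
        omega
      rw [hpow]
  -- kernel dimensions and conclusion
  have hker : ∀ k, finrank ℂ (LinearMap.ker (x' ^ k))
      = ∑ r ∈ Finset.range (2 * N), min k (Lt r) :=
    fun k => JTAux.finrank_ker_pow CQ x' h0Q hsQ hLtN k
  have hcol : ∀ k, σ.colLen k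
      = ((Finset.range (2 * N)).filter (fun r => k < Lt r)).card := by
    intro k
    have hstep : ∑ r ∈ Finset.range (2 * N), min (k + 1) (Lt r)
        = (∑ r ∈ Finset.range (2 * N), min k (Lt r))
          + ((Finset.range (2 * N)).filter (fun r => k < Lt r)).card := by
      rw [Finset.card_filter, ← Finset.sum_add_distrib]
      refine Finset.sum_congr rfl fun r _ => ?_
      by_cases hr : k < Lt r
      · rw [if_pos hr]; omega
      · rw [if_neg hr]; omega
    have hσk := hσ k
    rw [hker (k + 1), hker k] at hσk
    omega
  have hLtanti : ∀ r1 r2, r1 ≤ r2 → Lt r2 ≤ Lt r1 := by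
    have hstep : ∀ r, Lt (r + 1) ≤ Lt r := by
      intro r
      simp only [hLtdef]
      by_cases hr : r % 2 = 0
      · rw [if_pos hr, if_neg (by omega)]
        have h1 : (r + 1) / 2 = r / 2 := by omega
        rw [h1]
        exact Nat.add_le_add_right (μ.rowLen_anti _ _ (by omega)) _
      · rw [if_neg hr, if_pos (by omega)]
        have h1 : (r + 1) / 2 = r / 2 + 1 := by omega
        rw [h1]
        exact Nat.add_le_add_left (ν.rowLen_anti _ _ (by omega)) _
    exact fun r1 r2 h12 => antitone_nat_of_succ_le hstep h12
  have hrow : ∀ r0, σ.rowLen r0 = Lt r0 := by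
    intro r0
    have key : ∀ j, j < σ.rowLen r0 ↔ j < Lt r0 := by
      intro j
      rw [← YoungDiagram.mem_iff_lt_rowLen, YoungDiagram.mem_iff_lt_colLen, hcol j]
      constructor
      · intro hlt
        by_contra hc
        have hsub : (Finset.range (2 * N)).filter (fun r => j < Lt r)
            ⊆ Finset.range r0 := by
          intro r' hr'
          simp only [Finset.mem_filter, Finset.mem_range] at hr' ⊢
          by_contra hge
          have := hLtanti r0 r' (by omega)
          omega
        have hcle := Finset.card_le_card hsub
        rw [Finset.card_range] at hcle
        omega
      · intro hlt
        have hr02N : r0 < 2 * N := by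
          by_contra hc
          rw [hLtN r0 (by omega)] at hlt
          omega
        have hsub : Finset.range (r0 + 1)
            ⊆ (Finset.range (2 * N)).filter (fun r => j < Lt r) := by
          intro r' hr'
          simp only [Finset.mem_filter, Finset.mem_range] at hr' ⊢
          have := hLtanti r' r0 (by omega)
          exact ⟨by omega, by omega⟩
        have hcle := Finset.card_le_card hsub
        rw [Finset.card_range] at hcle
        omega
    have h1 := key (σ.rowLen r0)
    have h2 := key (Lt r0)
    omega
  constructor
  · rw [hrow (2 * i0)]
    simp only [hLtdef]
    rw [if_pos (by omega)]
    have h1 : 2 * i0 / 2 = i0 := by omega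
    rw [h1]
  · rw [hrow (2 * i0 + 1)]
    simp only [hLtdef]
    rw [if_neg (by omega)]
    have h1 : (2 * i0 + 1) / 2 = i0 := by omega
    rw [h1]
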